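/- (Proposition 5, alternative Nash equilibrium under generalized uniform pricing) Let 𝓘^γ be a nonempty proper subset of the suppliers {1, …, I}. Suppose: every i ∈ 𝓘^γ bids price pᵢ* = 0 and quantity qᵢ* > 0 with ∑_{i∈𝓘^γ} qᵢ* = D; every supplier k ∉ 𝓘^γ bids price p_k* ∈ (0, p̄] and quantity q_k* > 0; j ∈ argmin_{k ∉ 𝓘^γ} p_k*; and for every i ∈ 𝓘^γ, qᵢ* ≤ yᵢ*(p_j*) and qᵢ* ≤ q_j*. Then this bid profile is a pure Nash equilibrium of the generalized uniform-pricing game with clearing price π* = p_j*: each i ∈ 𝓘^γ earns Rᵢ(qᵢ*; p_j*), each k ∉ 𝓘^γ earns 0, and no supplier can strictly increase its payoff by a unilateral deviation (p', q') ∈ [0, p̄] × [0, ∞), for any merit-order-optimal allocation and clearing price determined by the pricing rule after the deviation. -/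

import Mathlib

open MeasureTheory Set

/-- The cumulative distribution function `F(t) = P(X ≤ t)` of a random variable `X`. -/
noncomputable def cdfOf {Ω : Type*} [MeasurableSpace Ω] (μ : Measure Ω) (X : Ω → ℝ) (t : ℝ) : ℝ :=
  (μ {ω | X ω ≤ t}).toReal

/-- The generalized inverse `F⁻¹(u) = inf {t ≥ 0 : F(t) ≥ u}`. -/
noncomputable def geninv (F : ℝ → ℝ) (u : ℝ) : ℝ :=
  sInf {t : ℝ | 0 ≤ t ∧ u ≤ F t}

/-- The optimal commitment function `y*(π) = F⁻¹(min(π/λ, 1))`. -/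
noncomputable def ystar (F : ℝ → ℝ) (lam : ℝ) (pr : ℝ) : ℝ :=
  geninv F (min (pr / lam) 1)

/-- The expected profit `R(x; π) = x·π − λ·E[(x − X)⁺]` of a supplier paid day-ahead
price `π` for committed quantity `x`, with real-time penalty price `λ`. -/
noncomputable def profit {Ω : Type*} [MeasurableSpace Ω] (μ : Measure Ω) (X : Ω → ℝ)
    (lam : ℝ) (pr : ℝ) (x : ℝ) : ℝ :=
  x * pr - lam * ∫ ω, max (x - X ω) 0 ∂μ

/-- Extend a quantity/price/allocation vector over the suppliers `Fin I` to the index set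
`Option (Fin I)`, where `none` stands for the system operator (supplier `0`), whose value
is `a0`. -/
def extOp {I : ℕ} (a0 : ℝ) (a : Fin I → ℝ) : Option (Fin I) → ℝ :=
  fun j => j.elim a0 a

/-- Merit-order-optimal allocation: the operator is supplier `0` with bid price `p̄` and
quantity `D`; the allocation `(x₀, x)` is feasible and maximizes
`∑_{i=0}^{I} (p̄ − pᵢ)·xᵢ` subject to `∑_{i=0}^{I} xᵢ = D` and `0 ≤ xᵢ ≤ qᵢ`. -/
def MeritOpt {I : ℕ} (pbar D : ℝ) (p q : Fin I → ℝ) (x0 : ℝ) (x : Fin I → ℝ) : Prop :=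
  (0 ≤ x0 ∧ x0 ≤ D ∧ (∀ i, 0 ≤ x i ∧ x i ≤ q i) ∧ x0 + ∑ i, x i = D) ∧
  ∀ (y0 : ℝ) (y : Fin I → ℝ),
    0 ≤ y0 → y0 ≤ D → (∀ i, 0 ≤ y i ∧ y i ≤ q i) → y0 + ∑ i, y i = D →
    (pbar - pbar) * y0 + ∑ i, (pbar - p i) * y i
      ≤ (pbar - pbar) * x0 + ∑ i, (pbar - p i) * x i

/-- The clearing price rule: let `P` be the maximum bid price among indices (including the
operator, with bid price `p̄` and quantity `D`) with `xᵢ > 0`; if some index `i` with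
`pᵢ = P` and `xᵢ > 0` has `xᵢ < qᵢ`, the clearing price is `P`; otherwise it is the
minimum bid price among indices (including the operator) with `xᵢ = 0`. -/
def IsClearingPrice {I : ℕ} (pbar D : ℝ) (p q : Fin I → ℝ) (x0 : ℝ) (x : Fin I → ℝ)
    (c : ℝ) : Prop :=
  (∃ i : Option (Fin I), 0 < extOp x0 x i ∧ extOp x0 x i < extOp D q i ∧
      (∀ k : Option (Fin I), 0 < extOp x0 x k → extOp pbar p k ≤ extOp pbar p i) ∧
      c = extOp pbar p i) ∨
  ((¬ ∃ i : Option (Fin I), 0 < extOp x0 x i ∧ extOp x0 x i < extOp D q i ∧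
      (∀ k : Option (Fin I), 0 < extOp x0 x k → extOp pbar p k ≤ extOp pbar p i)) ∧
    ∃ j : Option (Fin I), extOp x0 x j = 0 ∧
      (∀ k : Option (Fin I), extOp x0 x k = 0 → extOp pbar p j ≤ extOp pbar p k) ∧
      c = extOp pbar p j)


-- Auxiliary lemmas ----------------------------------------------------------

@[simp] lemma extOp_none' {I : ℕ} (a0 : ℝ) (a : Fin I → ℝ) : extOp a0 a none = a0 := rfl
@[simp] lemma extOp_some' {I : ℕ} (a0 : ℝ) (a : Fin I → ℝ) (m : Fin I) :
    extOp a0 a (some m) = a m := rfl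

lemma exch_ss {I : ℕ} {pbar D : ℝ} {P Q : Fin I → ℝ} {x0 : ℝ} {x : Fin I → ℝ}
    (h : MeritOpt pbar D P Q x0 x) {a b : Fin I} (hab : a ≠ b)
    (ha : 0 < x a) (hb : x b < Q b) : P a ≤ P b := by
  obtain ⟨⟨h00, h0D, hbd, hsum⟩, hopt⟩ := h
  set ε : ℝ := min (x a) (Q b - x b) with hεdef
  have hε : 0 < ε := lt_min ha (by linarith)
  have hεa : ε ≤ x a := min_le_left _ _
  have hεb : ε ≤ Q b - x b := min_le_right _ _
  set y : Fin I → ℝ := fun i => x i + (if i = b then ε else 0) - (if i = a then ε else 0)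
    with hy
  have hyb : ∀ i, 0 ≤ y i ∧ y i ≤ Q i := by
    intro i
    rcases eq_or_ne i a with rfl | hia
    · have hya : y i = x i - ε := by simp [hy, hab]
      rw [hya]
      exact ⟨by linarith, by linarith [(hbd i).2]⟩
    · rcases eq_or_ne i b with rfl | hib
      · have hyb' : y i = x i + ε := by simp [hy, hia]
        rw [hyb']
        exact ⟨by linarith [(hbd i).1], by linarith⟩
      · have hyo : y i = x i := by simp [hy, hia, hib]
        rw [hyo]; exact hbd i
  have hysum : ∑ i, y i = ∑ i, x i := by
    simp [hy, Finset.sum_add_distrib, Finset.sum_sub_distrib, Finset.sum_ite_eq']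
  have := hopt x0 y h00 h0D hyb (by rw [hysum]; exact hsum)
  have hobj : ∑ i, (pbar - P i) * y i
      = (∑ i, (pbar - P i) * x i) + (pbar - P b) * ε - (pbar - P a) * ε := by
    simp only [hy, mul_add, mul_sub, Finset.sum_add_distrib, Finset.sum_sub_distrib,
      mul_ite, mul_zero, Finset.sum_ite_eq', Finset.mem_univ, if_pos]
  rw [hobj] at this
  have h2 : (pbar - P b) * ε - (pbar - P a) * ε ≤ 0 := by linarith
  nlinarith

lemma exch_0s {I : ℕ} {pbar D : ℝ} {P Q : Fin I → ℝ} {x0 : ℝ} {x : Fin I → ℝ}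
    (h : MeritOpt pbar D P Q x0 x) {b : Fin I}
    (ha : 0 < x0) (hb : x b < Q b) : pbar ≤ P b := by
  obtain ⟨⟨h00, h0D, hbd, hsum⟩, hopt⟩ := h
  set ε : ℝ := min x0 (Q b - x b) with hεdef
  have hε : 0 < ε := lt_min ha (by linarith)
  have hεa : ε ≤ x0 := min_le_left _ _
  have hεb : ε ≤ Q b - x b := min_le_right _ _
  set y : Fin I → ℝ := fun i => x i + (if i = b then ε else 0) with hy
  have hyb : ∀ i, 0 ≤ y i ∧ y i ≤ Q i := by
    intro i
    rcases eq_or_ne i b with rfl | hib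
    · have hyb' : y i = x i + ε := by simp [hy]
      rw [hyb']
      exact ⟨by linarith [(hbd i).1], by linarith⟩
    · have hyo : y i = x i := by simp [hy, hib]
      rw [hyo]; exact hbd i
  have hysum : ∑ i, y i = (∑ i, x i) + ε := by
    simp [hy, Finset.sum_add_distrib, Finset.sum_ite_eq']
  have hxnn : 0 ≤ ∑ i, x i := Finset.sum_nonneg fun i _ => (hbd i).1
  have := hopt (x0 - ε) y (by linarith) (by linarith) hyb (by rw [hysum]; linarith)
  have hobj : ∑ i, (pbar - P i) * y i
      = (∑ i, (pbar - P i) * x i) + (pbar - P b) * ε := by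
    simp only [hy, mul_add, Finset.sum_add_distrib, mul_ite, mul_zero,
      Finset.sum_ite_eq', Finset.mem_univ, if_pos]
  rw [hobj] at this
  nlinarith

lemma merit_zero_fill {I : ℕ} {pbar D : ℝ} {P Q : Fin I → ℝ} {x0 : ℝ} {x : Fin I → ℝ}
    (hopt : MeritOpt pbar D P Q x0 x) (hpbar : 0 < pbar) (hD : 0 ≤ D)
    (hPnn : ∀ k, 0 ≤ P k) (hQnn : ∀ k, 0 ≤ Q k)
    (S : Finset (Fin I)) (hPS : ∀ m ∈ S, P m = 0) (hQsum : ∑ m ∈ S, Q m = D) :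
    x0 = 0 ∧ ∀ k, P k * x k = 0 := by
  obtain ⟨⟨h00, h0D, hbd, hsum⟩, ho⟩ := hopt
  set y : Fin I → ℝ := fun m => if m ∈ S then Q m else 0 with hy
  have hyb : ∀ m, 0 ≤ y m ∧ y m ≤ Q m := fun m => by
    by_cases h : m ∈ S <;> simp [hy, h, hQnn m]
  have hysum : (0:ℝ) + ∑ m, y m = D := by
    rw [zero_add]
    calc ∑ m, y m = ∑ m ∈ Finset.univ ∩ S, Q m := by rw [hy]; exact Finset.sum_ite_mem _ _ _
      _ = D := by rw [Finset.univ_inter]; exact hQsum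
  have h1 := ho 0 y le_rfl hD hyb hysum
  have hyobj : ∑ m, (pbar - P m) * y m = pbar * D := by
    have he : ∀ m, (pbar - P m) * y m = if m ∈ S then pbar * Q m else 0 := fun m => by
      by_cases h : m ∈ S <;> simp [hy, h, hPS m]
    calc ∑ m, (pbar - P m) * y m = ∑ m, (if m ∈ S then pbar * Q m else 0) :=
          Finset.sum_congr rfl fun m _ => he m
      _ = ∑ m ∈ Finset.univ ∩ S, pbar * Q m := Finset.sum_ite_mem _ _ _
      _ = pbar * D := by rw [Finset.univ_inter, ← Finset.mul_sum, hQsum]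
  have hxobj : ∑ m, (pbar - P m) * x m = pbar * (D - x0) - ∑ m, P m * x m := by
    have he : ∀ m, (pbar - P m) * x m = pbar * x m - P m * x m := fun m => by ring
    rw [Finset.sum_congr rfl fun m (_ : m ∈ Finset.univ) => he m, Finset.sum_sub_distrib,
      ← Finset.mul_sum]
    have hsx : ∑ m, x m = D - x0 := by linarith
    rw [hsx]
  rw [hyobj, hxobj] at h1
  have h2 : pbar * x0 + ∑ m, P m * x m ≤ 0 := by nlinarith [h1]
  have hSnn : 0 ≤ ∑ m, P m * x m :=
    Finset.sum_nonneg fun m _ => mul_nonneg (hPnn m) (hbd m).1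
  have hx00 : x0 = 0 := by nlinarith [mul_nonneg hpbar.le h00]
  have hsum0 : ∑ m, P m * x m = 0 := le_antisymm (by nlinarith) hSnn
  exact ⟨hx00, fun k =>
    (Finset.sum_eq_zero_iff_of_nonneg fun m _ => mul_nonneg (hPnn m) (hbd m).1).1 hsum0 k
      (Finset.mem_univ k)⟩

section ana
variable {Ω : Type*} [MeasurableSpace Ω] (μ : Measure Ω) [IsProbabilityMeasure μ]
  {X : Ω → ℝ}

lemma integrable_posPart (hX : Measurable X) (hXnn : ∀ ω, 0 ≤ X ω) (a : ℝ) :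
    Integrable (fun ω => max (a - X ω) 0) μ := by
  refine (integrable_const |a|).mono' ?_ ?_
  · exact ((measurable_const.sub hX).max measurable_const).aestronglyMeasurable
  · refine Filter.Eventually.of_forall fun ω => ?_
    rw [Real.norm_eq_abs, abs_of_nonneg (le_max_right _ _)]
    have := hXnn ω
    rcases le_or_gt (a - X ω) 0 with h | h
    · rw [max_eq_right h]; positivity
    · rw [max_eq_left h.le]
      calc a - X ω ≤ a := by linarith
        _ ≤ |a| := le_abs_self a

lemma profit_zero (hXnn : ∀ ω, 0 ≤ X ω) (lam c : ℝ) : profit μ X lam c 0 = 0 := by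
  have h0 : ∫ ω, max ((0:ℝ) - X ω) 0 ∂μ = ∫ _ω, (0:ℝ) ∂μ :=
    integral_congr_ae (Filter.Eventually.of_forall fun ω =>
      max_eq_right (by linarith [hXnn ω]))
  unfold profit
  rw [h0]
  simp

lemma profit_nonpos (lam c x : ℝ) (hlam : 0 ≤ lam) (hc : c ≤ 0) (hx : 0 ≤ x) :
    profit μ X lam c x ≤ 0 := by
  have h1 : x * c ≤ 0 := mul_nonpos_of_nonneg_of_nonpos hx hc
  have h2 : 0 ≤ ∫ ω, max (x - X ω) 0 ∂μ :=
    integral_nonneg fun ω => le_max_right _ _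
  have := mul_nonneg hlam h2
  unfold profit; linarith

lemma profit_price_mono (lam x c c' : ℝ) (hx : 0 ≤ x) (hcc : c ≤ c') :
    profit μ X lam c x ≤ profit μ X lam c' x := by
  unfold profit
  have := mul_le_mul_of_nonneg_left hcc hx
  linarith

lemma profit_mono (hX : Measurable X) (hXnn : ∀ ω, 0 ≤ X ω) {lam pr a b : ℝ}
    (hlam : 0 < lam) (ha : 0 ≤ a) (hab : a ≤ b) (hFb : lam * cdfOf μ X b ≤ pr) :
    profit μ X lam pr a ≤ profit μ X lam pr b := by
  have hint : ∫ ω, max (b - X ω) 0 ∂μ - ∫ ω, max (a - X ω) 0 ∂μ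
      ≤ (b - a) * cdfOf μ X b := by
    rw [← integral_sub (integrable_posPart μ hX hXnn b) (integrable_posPart μ hX hXnn a)]
    have hs : MeasurableSet {ω | X ω ≤ b} := hX measurableSet_Iic
    have hptw : ∀ ω, max (b - X ω) 0 - max (a - X ω) 0
        ≤ Set.indicator {ω | X ω ≤ b} (fun _ => b - a) ω := by
      intro ω
      rcases le_or_gt (X ω) b with h | h
      · have hi : Set.indicator {ω | X ω ≤ b} (fun _ => b - a) ω = b - a :=
          Set.indicator_of_mem (show ω ∈ {ω | X ω ≤ b} from h) _
        rw [hi]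
        rcases le_or_gt (X ω) a with h2 | h2
        · rw [max_eq_left (by linarith), max_eq_left (by linarith)]; linarith
        · rw [max_eq_left (by linarith), max_eq_right (by linarith)]; linarith
      · have hi : Set.indicator {ω | X ω ≤ b} (fun _ => b - a) ω = 0 :=
          Set.indicator_of_notMem (by simpa using h.not_ge) _
        rw [hi, max_eq_right (by linarith), max_eq_right (by linarith)]; linarith
    calc ∫ ω, (max (b - X ω) 0 - max (a - X ω) 0) ∂μ
        ≤ ∫ ω, Set.indicator {ω | X ω ≤ b} (fun _ => b - a) ω ∂μ := by
          refine integral_mono ?_ ?_ hptw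
          · exact (integrable_posPart μ hX hXnn b).sub (integrable_posPart μ hX hXnn a)
          · exact (integrable_const (b - a)).indicator hs
      _ = (b - a) * cdfOf μ X b := by
          rw [integral_indicator_const _ hs, cdfOf, smul_eq_mul, mul_comm]; rfl
  have h2 : lam * (∫ ω, max (b - X ω) 0 ∂μ - ∫ ω, max (a - X ω) 0 ∂μ)
      ≤ lam * ((b - a) * cdfOf μ X b) :=
    mul_le_mul_of_nonneg_left hint hlam.le
  have h3 : lam * ((b - a) * cdfOf μ X b) ≤ (b - a) * pr := by
    have : (b - a) * (lam * cdfOf μ X b) ≤ (b - a) * pr :=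
      mul_le_mul_of_nonneg_left hFb (by linarith)
    linarith [this]
  unfold profit
  nlinarith [h2, h3]

lemma cdf_le_of_le_ystar (hX : Measurable X) (hFc : Continuous (cdfOf μ X))
    {lam pr qi : ℝ} (hlam : 0 < lam)
    (hqi : 0 < qi) (hle : qi ≤ ystar (cdfOf μ X) lam pr) :
    lam * cdfOf μ X qi ≤ pr := by
  set F := cdfOf μ X
  set u := min (pr / lam) 1 with hu
  have hupr : u ≤ pr / lam := min_le_left _ _
  have hFqu : F qi ≤ u := by
    by_contra hcon
    push_neg at hcon
    have hmem : qi ∈ {t : ℝ | 0 ≤ t ∧ u ≤ F t} := ⟨hqi.le, hcon.le⟩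
    have hbdd : BddBelow {t : ℝ | 0 ≤ t ∧ u ≤ F t} := ⟨0, fun t ht => ht.1⟩
    have hqeq : qi = ystar F lam pr :=
      le_antisymm hle (by rw [ystar, geninv, ← hu]; exact csInf_le hbdd hmem)
    have hlt : ∀ t ∈ Set.Ioo (0:ℝ) qi, F t ≤ u := by
      intro t ht
      by_contra h2
      push_neg at h2
      have : qi ≤ t := by
        rw [hqeq, ystar, geninv, ← hu]
        exact csInf_le hbdd ⟨ht.1.le, h2.le⟩
      exact absurd this (not_le.2 ht.2)
    have htend : Filter.Tendsto F (nhdsWithin qi (Set.Iio qi)) (nhds (F qi)) :=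
      (hFc.tendsto qi).mono_left nhdsWithin_le_nhds
    have hev : ∀ᶠ t in nhdsWithin qi (Set.Iio qi), F t ≤ u := by
      filter_upwards [Ioo_mem_nhdsLT_of_mem (Set.mem_Ioc.2 ⟨hqi, le_refl qi⟩)] with t ht
      exact hlt t ht
    have : F qi ≤ u := le_of_tendsto htend hev
    linarith
  have hfin : F qi ≤ pr / lam := le_trans hFqu hupr
  calc lam * F qi ≤ lam * (pr / lam) := mul_le_mul_of_nonneg_left hfin hlam.le
    _ = pr := by field_simp

end ana

/-- Proposition 5 (alternative Nash equilibrium under generalized uniform pricing): let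
`S = 𝓘^γ` be a nonempty proper subset of suppliers bidding price `0` with total quantity
`D`, let every supplier outside `S` bid a positive price (at most `p̄`) and positive
quantity, let `j ∉ S` attain the minimum price outside `S`, and suppose `qᵢ* ≤ yᵢ*(p_j*)`
and `qᵢ* ≤ q_j*` for all `i ∈ S`.  Then the profile is a pure Nash equilibrium with
clearing price `p_j*`: every merit-order-optimal allocation commits each `i ∈ S` to `qᵢ*`
(earning `Rᵢ(qᵢ*; p_j*)`) and each `k ∉ S` to `0` (earning `0`), the pricing rule yields
`p_j*`, and no unilateral deviation `(p', q') ∈ [0, p̄] × [0, ∞)` yields a larger payoff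
for any merit-order-optimal allocation and clearing price after the deviation. -/
theorem up_general_alternative_equilibrium
    {Ω : Type*} [MeasurableSpace Ω] (μ : Measure Ω) [IsProbabilityMeasure μ]
    (I : ℕ) (hI : 2 ≤ I)
    (X : Fin I → Ω → ℝ) (hX : ∀ i, Measurable (X i)) (hXnn : ∀ i ω, 0 ≤ X i ω)
    (Xbar : Fin I → ℝ) (hXbar : ∀ i, 0 < Xbar i)
    (hsupp : ∀ i, μ {ω | X i ω ≤ Xbar i} = 1)
    (hFc : ∀ i, Continuous (cdfOf μ (X i)))
    (hF0 : ∀ i, cdfOf μ (X i) 0 = 0) (hF1 : ∀ i, cdfOf μ (X i) (Xbar i) = 1)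
    (lam : ℝ) (hlam : 0 < lam) (pbar : ℝ) (hpbar : 0 < pbar)
    (D : ℝ) (hD : 0 < D)
    (S : Finset (Fin I)) (hSne : S.Nonempty) (hSproper : S ≠ Finset.univ)
    (p q : Fin I → ℝ)
    (hpS : ∀ i ∈ S, p i = 0) (hqS : ∀ i ∈ S, 0 < q i)
    (hqsum : ∑ i ∈ S, q i = D)
    (hpout : ∀ k, k ∉ S → 0 < p k ∧ p k ≤ pbar) (hqout : ∀ k, k ∉ S → 0 < q k)
    (j : Fin I) (hj : j ∉ S) (hjmin : ∀ k, k ∉ S → p j ≤ p k)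
    (hqy : ∀ i ∈ S, q i ≤ ystar (cdfOf μ (X i)) lam (p j))
    (hqj : ∀ i ∈ S, q i ≤ q j) :
    -- at the profile, each `i ∈ S` is committed to `q i`, each `k ∉ S` to `0`, the lost
    -- load is `0`, and the clearing price is `p j`
    (∀ (x0 : ℝ) (x : Fin I → ℝ), MeritOpt pbar D p q x0 x →
      (∀ i ∈ S, x i = q i) ∧ (∀ k, k ∉ S → x k = 0) ∧ x0 = 0 ∧
      ∀ c : ℝ, IsClearingPrice pbar D p q x0 x c → c = p j) ∧
    -- no unilateral deviation is profitable: each `i ∈ S` earns `Rᵢ(qᵢ; p j)` and each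
    -- `k ∉ S` earns `0` at the profile
    (∀ (i : Fin I) (p' q' : ℝ), 0 ≤ p' → p' ≤ pbar → 0 ≤ q' →
      ∀ (x0 : ℝ) (x : Fin I → ℝ),
        MeritOpt pbar D (Function.update p i p') (Function.update q i q') x0 x →
        ∀ c : ℝ, IsClearingPrice pbar D (Function.update p i p')
          (Function.update q i q') x0 x c →
          profit μ (X i) lam c (x i)
            ≤ (if i ∈ S then profit μ (X i) lam (p j) (q i) else 0)) := by
  have hpj : 0 < p j := (hpout j hj).1
  have hpjbar : p j ≤ pbar := (hpout j hj).2
  have hq0' : ∀ k, 0 ≤ q k := fun k => by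
    by_cases h : k ∈ S
    · exact (hqS k h).le
    · exact (hqout k h).le
  have hp0' : ∀ k, 0 ≤ p k := fun k => by
    by_cases h : k ∈ S
    · rw [hpS k h]
    · exact (hpout k h).1.le
  constructor
  · -- Part 1: characterization at the profile
    intro x0 x hopt
    have hbd := hopt.1.2.2.1
    have hsumx := hopt.1.2.2.2
    obtain ⟨hx00, hterm⟩ := merit_zero_fill hopt hpbar hD.le hp0' hq0' S hpS hqsum
    have hk0 : ∀ k, k ∉ S → x k = 0 := by
      intro k hk
      have h := hterm k
      have hpk := (hpout k hk).1
      have hxk := (hbd k).1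
      by_contra hne
      have hpos : 0 < x k := lt_of_le_of_ne hxk (Ne.symm hne)
      nlinarith
    have hsumS : ∑ m ∈ S, x m = D := by
      have h1 : ∑ m, x m = D := by rw [hx00, zero_add] at hsumx; exact hsumx
      rw [← h1]
      exact Finset.sum_subset (Finset.subset_univ S) fun k _ hk => hk0 k hk
    have hSq : ∀ m ∈ S, x m = q m := by
      have hzero : ∑ m ∈ S, (q m - x m) = 0 := by
        rw [Finset.sum_sub_distrib, hqsum, hsumS, sub_self]
      intro m hm
      have := (Finset.sum_eq_zero_iff_of_nonneg
        fun m _ => sub_nonneg.2 (hbd m).2).1 hzero m hm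
      linarith
    refine ⟨hSq, hk0, hx00, ?_⟩
    intro c hcp
    rcases hcp with ⟨i', h1, h2, h3, hc⟩ | ⟨hne, j', hz, hmin, hc⟩
    · exfalso
      match i' with
      | none =>
        rw [extOp_none', hx00] at h1
        exact lt_irrefl 0 h1
      | some m =>
        rw [extOp_some'] at h1 h2
        rw [extOp_some'] at h2
        by_cases hm : m ∈ S
        · rw [hSq m hm] at h2; exact lt_irrefl _ h2
        · rw [hk0 m hm] at h1; exact lt_irrefl 0 h1
    · match j' with
      | none =>
        have h4 := hmin (some j) (by rw [extOp_some']; exact hk0 j hj)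
        rw [extOp_none'] at h4
        rw [extOp_some'] at h4
        rw [extOp_none'] at hc
        rw [hc]; linarith
      | some k =>
        rw [extOp_some'] at hz hc
        have hkS : k ∉ S := by
          intro hkS
          rw [hSq k hkS] at hz
          exact absurd hz (ne_of_gt (hqS k hkS))
        have h4 := hmin (some j) (by rw [extOp_some']; exact hk0 j hj)
        rw [extOp_some', extOp_some'] at h4
        have h5 := hjmin k hkS
        rw [hc]; linarith
  · -- Part 2: no profitable deviation
    intro i p' q' hp'0 hp'bar hq'0 x0 x hopt c hcp
    set P := Function.update p i p' with hP
    set Q := Function.update q i q' with hQdef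
    have hbd := hopt.1.2.2.1
    have hsumx := hopt.1.2.2.2
    have hx0nn := hopt.1.1
    have hxnn : ∀ k, 0 ≤ x k := fun k => (hbd k).1
    have hPi : P i = p' := Function.update_self i p' p
    have hQi : Q i = q' := Function.update_self i q' q
    have hPk : ∀ k, k ≠ i → P k = p k := fun k hk => Function.update_of_ne hk p' p
    have hQk : ∀ k, k ≠ i → Q k = q k := fun k hk => Function.update_of_ne hk q' q
    have hPnn : ∀ k, 0 ≤ P k := fun k => by
      rcases eq_or_ne k i with rfl | h
      · rw [hPi]; exact hp'0
      · rw [hPk k h]; exact hp0' k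
    have hQnn : ∀ k, 0 ≤ Q k := fun k => by
      rcases eq_or_ne k i with rfl | h
      · rw [hQi]; exact hq'0
      · rw [hQk k h]; exact hq0' k
    have hPbar : ∀ k, P k ≤ pbar := fun k => by
      rcases eq_or_ne k i with rfl | h
      · rw [hPi]; exact hp'bar
      · rw [hPk k h]
        by_cases hk : k ∈ S
        · rw [hpS k hk]; exact hpbar.le
        · exact (hpout k hk).2
    by_cases hiS : i ∈ S
    · -- deviator belongs to S
      simp only [if_pos hiS]
      have hqipos := hqS i hiS
      have hkeyF : lam * cdfOf μ (X i) (q i) ≤ p j :=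
        cdf_le_of_le_ystar μ (hX i) (hFc i) hlam hqipos (hqy i hiS)
      have hRmono : ∀ a, 0 ≤ a → a ≤ q i →
          profit μ (X i) lam (p j) a ≤ profit μ (X i) lam (p j) (q i) :=
        fun a h1 h2 => profit_mono μ (hX i) (hXnn i) hlam h1 h2 hkeyF
      have hR0 : 0 ≤ profit μ (X i) lam (p j) (q i) := by
        have := hRmono 0 le_rfl hqipos.le
        rwa [profit_zero μ (hXnn i) lam (p j)] at this
      rcases eq_or_lt_of_le (hxnn i) with hxi | hxi
      · rw [← hxi, profit_zero μ (hXnn i) lam c]; exact hR0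
      have hij : i ≠ j := fun h => hj (h ▸ hiS)
      have hQj : Q j = q j := hQk j (Ne.symm hij)
      have hPj : P j = p j := hPk j (Ne.symm hij)
      by_cases hcap : ∀ m ∈ S.erase i, x m = Q m
      · -- all other members of S at capacity
        have hsumS' : ∑ m ∈ S.erase i, x m = D - q i := by
          have h1 : ∑ m ∈ S.erase i, x m = ∑ m ∈ S.erase i, q m := by
            refine Finset.sum_congr rfl fun m hm => ?_
            rw [hcap m hm, hQk m (Finset.ne_of_mem_erase hm)]
          have h2 := Finset.sum_erase_add S q hiS
          rw [h1]; linarith [hqsum]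
        have hsplit : x i + x0 + ∑ k ∈ Sᶜ, x k = q i := by
          have h1 : ∑ m ∈ S, x m + ∑ m ∈ Sᶜ, x m = ∑ m, x m := S.sum_add_sum_compl x
          have h2 := Finset.sum_erase_add S x hiS
          linarith [hsumx, hsumS']
        have hcnn : 0 ≤ ∑ k ∈ Sᶜ, x k := Finset.sum_nonneg fun k _ => hxnn k
        have hxiq : x i ≤ q i := by linarith
        have hxj : x j < q j := by
          have hjc : j ∈ Sᶜ := Finset.mem_compl.2 hj
          have h3 := Finset.single_le_sum (fun k (_ : k ∈ Sᶜ) => hxnn k) hjc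
          have hqij := hqj i hiS
          linarith
        have hxjQ : x j < Q j := by rw [hQj]; exact hxj
        have hp'j : p' ≤ p j := by
          have := exch_ss hopt hij hxi hxjQ
          rwa [hPi, hPj] at this
        have hkout : ∀ k, k ∉ S → 0 < x k → p k ≤ p j := by
          intro k hk hxk
          rcases eq_or_ne k j with rfl | hkj
          · exact le_rfl
          · have := exch_ss hopt hkj hxk hxjQ
            rwa [hPk k (fun h => hk (h ▸ hiS)), hPj] at this
        have hcle : c ≤ p j := by
          rcases le_or_gt pbar (p j) with hpb | hpb
          · have hcb : c ≤ pbar := by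
              rcases hcp with ⟨i', h1, h2, h3, hc⟩ | ⟨hne, j', hz, hmin, hc⟩
              · rw [hc]
                match i' with
                | none => exact le_rfl
                | some m => rw [extOp_some']; exact hPbar m
              · rw [hc]
                match j' with
                | none => exact le_rfl
                | some m => rw [extOp_some']; exact hPbar m
            linarith
          · have hx00 : x0 = 0 := by
              by_contra hne0
              have hx0pos : 0 < x0 := lt_of_le_of_ne hx0nn (Ne.symm hne0)
              have := exch_0s hopt hx0pos hxjQ
              rw [hPj] at this; linarith
            have hposle : ∀ o : Option (Fin I), 0 < extOp x0 x o →
                extOp pbar P o ≤ p j := by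
              intro o ho
              match o with
              | none =>
                rw [extOp_none', hx00] at ho
                exact absurd ho (lt_irrefl 0)
              | some m =>
                rw [extOp_some'] at ho ⊢
                by_cases hm : m ∈ S
                · rcases eq_or_ne m i with rfl | hmi
                  · rw [hPi]; exact hp'j
                  · rw [hPk m hmi, hpS m hm]; exact hpj.le
                · rw [hPk m (fun h => hm (h ▸ hiS))]
                  exact hkout m hm ho
            rcases hcp with ⟨i', h1, h2, h3, hc⟩ | ⟨hne, j', hz, hmin, hc⟩
            · rw [hc]; exact hposle i' h1
            · rcases eq_or_lt_of_le (hxnn j) with hxj0 | hxj0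
              · have h4 := hmin (some j) (by rw [extOp_some']; exact hxj0.symm)
                rw [hc]
                refine le_trans h4 ?_
                rw [extOp_some', hPj]
              · exact absurd ⟨some j, by rw [extOp_some']; exact hxj0,
                  by rw [extOp_some', extOp_some']; exact hxjQ,
                  fun k hk => by rw [extOp_some', hPj]; exact hposle k hk⟩ hne
        calc profit μ (X i) lam c (x i) ≤ profit μ (X i) lam (p j) (x i) :=
              profit_price_mono μ lam (x i) c (p j) (hxnn i) hcle
          _ ≤ profit μ (X i) lam (p j) (q i) := hRmono (x i) (hxnn i) hxiq
      · -- some other member of S below capacity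
        push_neg at hcap
        obtain ⟨m, hmS', hmne⟩ := hcap
        have hmi : m ≠ i := Finset.ne_of_mem_erase hmS'
        have hmS : m ∈ S := Finset.mem_of_mem_erase hmS'
        have hmlt : x m < Q m := lt_of_le_of_ne (hbd m).2 hmne
        have hPm : P m = 0 := by rw [hPk m hmi]; exact hpS m hmS
        have hx00 : x0 = 0 := by
          by_contra hne0
          have hx0pos : 0 < x0 := lt_of_le_of_ne hx0nn (Ne.symm hne0)
          have := exch_0s hopt hx0pos hmlt
          rw [hPm] at this; linarith
        have hp'z : p' = 0 := by
          have := exch_ss hopt (Ne.symm hmi) hxi hmlt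
          rw [hPi, hPm] at this
          linarith
        have hout0 : ∀ k, k ∉ S → x k = 0 := by
          intro k hk
          rcases eq_or_lt_of_le (hxnn k) with h | h
          · exact h.symm
          · exfalso
            have hkm : k ≠ m := fun hh => hk (hh ▸ hmS)
            have := exch_ss hopt hkm h hmlt
            rw [hPk k (fun hh => hk (hh ▸ hiS)), hPm] at this
            linarith [(hpout k hk).1]
        have hposprice : ∀ o : Option (Fin I), 0 < extOp x0 x o →
            extOp pbar P o = 0 := by
          intro o ho
          match o with
          | none =>
            rw [extOp_none', hx00] at ho
            exact absurd ho (lt_irrefl 0)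
          | some m' =>
            rw [extOp_some'] at ho ⊢
            by_cases hm' : m' ∈ S
            · rcases eq_or_ne m' i with rfl | hm'i
              · rw [hPi]; exact hp'z
              · rw [hPk m' hm'i]; exact hpS m' hm'
            · rw [hout0 m' hm'] at ho
              exact absurd ho (lt_irrefl 0)
        have hcle : c ≤ 0 := by
          rcases hcp with ⟨i', h1, h2, h3, hc⟩ | ⟨hne, j', hz, hmin, hc⟩
          · rw [hc]; exact le_of_eq (hposprice i' h1)
          · rcases eq_or_lt_of_le (hxnn m) with hxm | hxm
            · have h4 := hmin (some m) (by rw [extOp_some']; exact hxm.symm)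
              rw [hc]
              refine le_trans h4 ?_
              rw [extOp_some', hPm]
            · exact absurd ⟨some m, by rw [extOp_some']; exact hxm,
                by rw [extOp_some', extOp_some']; exact hmlt,
                fun k hk => by rw [hposprice k hk, extOp_some']; exact hPnn m⟩ hne
        exact le_trans (profit_nonpos μ lam c (x i) hlam.le hcle (hxnn i)) hR0
    · -- deviator outside S
      simp only [if_neg hiS]
      have hPS' : ∀ m ∈ S, P m = 0 := fun m hm => by
        rw [hPk m (ne_of_mem_of_not_mem hm hiS)]; exact hpS m hm
      have hQsum' : ∑ m ∈ S, Q m = D := by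
        have : ∑ m ∈ S, Q m = ∑ m ∈ S, q m :=
          Finset.sum_congr rfl fun m hm => hQk m (ne_of_mem_of_not_mem hm hiS)
        rw [this]; exact hqsum
      obtain ⟨hx00, hterm⟩ := merit_zero_fill hopt hpbar hD.le hPnn hQnn S hPS' hQsum'
      rcases eq_or_lt_of_le (hxnn i) with hxi | hxi
      · rw [← hxi]
        exact le_of_eq (profit_zero μ (hXnn i) lam c)
      · have hp'z : p' = 0 := by
          have h := hterm i
          rw [hPi] at h
          by_contra hne
          have : 0 < p' := lt_of_le_of_ne hp'0 (Ne.symm hne)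
          nlinarith
        have hout0 : ∀ k, k ∉ S → k ≠ i → x k = 0 := by
          intro k hk hki
          have h := hterm k
          rw [hPk k hki] at h
          have hpk := (hpout k hk).1
          by_contra hne
          have : 0 < x k := lt_of_le_of_ne (hxnn k) (Ne.symm hne)
          nlinarith
        have hposprice : ∀ o : Option (Fin I), 0 < extOp x0 x o →
            extOp pbar P o = 0 := by
          intro o ho
          match o with
          | none =>
            rw [extOp_none', hx00] at ho
            exact absurd ho (lt_irrefl 0)
          | some m =>
            rw [extOp_some'] at ho ⊢
            by_cases hm : m ∈ S
            · rw [hPk m (ne_of_mem_of_not_mem hm hiS)]; exact hpS m hm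
            · rcases eq_or_ne m i with rfl | hmi
              · rw [hPi]; exact hp'z
              · rw [hout0 m hm hmi] at ho
                exact absurd ho (lt_irrefl 0)
        have hslack : ∃ m ∈ insert i S, x m < Q m := by
          by_contra hno
          push_neg at hno
          have hall : ∀ m ∈ insert i S, x m = Q m :=
            fun m hm => le_antisymm (hbd m).2 (hno m hm)
          have h1 : ∑ m ∈ insert i S, x m = ∑ m ∈ insert i S, Q m :=
            Finset.sum_congr rfl hall
          have h2 : ∑ m ∈ insert i S, Q m = q' + D := by
            rw [Finset.sum_insert hiS, hQi, hQsum']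
          have h3 : ∑ m ∈ insert i S, x m ≤ ∑ m, x m :=
            Finset.sum_le_sum_of_subset_of_nonneg (Finset.subset_univ _)
              fun m _ _ => hxnn m
          have h4 : x i ≤ q' := by have := (hbd i).2; rwa [hQi] at this
          have h5 : ∑ m, x m = D := by rw [hx00, zero_add] at hsumx; exact hsumx
          linarith
        obtain ⟨m, hmT, hmlt⟩ := hslack
        have hcle : c ≤ 0 := by
          rcases hcp with ⟨i', h1, h2, h3, hc⟩ | ⟨hne, j', hz, hmin, hc⟩
          · rw [hc]; exact le_of_eq (hposprice i' h1)
          · rcases eq_or_lt_of_le (hxnn m) with hxm | hxm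
            · have h4 := hmin (some m) (by rw [extOp_some']; exact hxm.symm)
              rw [hc]
              refine le_trans h4 ?_
              rw [extOp_some']
              rcases Finset.mem_insert.1 hmT with rfl | hm
              · rw [hPi]; exact le_of_eq hp'z
              · rw [hPk m (ne_of_mem_of_not_mem hm hiS), hpS m hm]
            · exact absurd ⟨some m, by rw [extOp_some']; exact hxm,
                by rw [extOp_some', extOp_some']; exact hmlt,
                fun k hk => by rw [hposprice k hk, extOp_some']; exact hPnn m⟩ hne
        exact profit_nonpos μ lam c (x i) hlam.le hcle (hxnn i)
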